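/- If φ : ℝ × X → X is a kinematic expansive flow on a compact metric space X, then for every T ≠ 0 the time-T homeomorphism φ_T is partially expansive with central dimension D = 1. -/

import Mathlib

open Metric Set

variable {X : Type*} [MetricSpace X]

/-- mesh of a family of sets is < ε -/
def MeshLT (𝒰 : Set (Set X)) (ε : ℝ) : Prop := ∀ A ∈ 𝒰, Metric.diam A < ε

/-- the order of a family of sets is ≤ n : every subfamily with more than n+1
elements has empty intersection -/
def OrdLE (𝒰 : Set (Set X)) (n : ℕ) : Prop :=
  ∀ 𝒱 : Finset (Set X), ↑𝒱 ⊆ 𝒰 → n + 1 < 𝒱.card → ⋂₀ (𝒱 : Set (Set X)) = ∅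

/-- the ε-dimension of Y is ≤ n -/
def DimEpsLE (Y : Set X) (ε : ℝ) (n : ℕ) : Prop :=
  ∃ 𝒰 : Set (Set X), (∀ A ∈ 𝒰, IsOpen A) ∧ Y ⊆ ⋃₀ 𝒰 ∧ MeshLT 𝒰 ε ∧ OrdLE 𝒰 n

/-- the ε-dimension of Y, as an extended natural number -/
noncomputable def dimEps (Y : Set X) (ε : ℝ) : ℕ∞ :=
  sInf {d : ℕ∞ | ∃ n : ℕ, d = n ∧ DimEpsLE Y ε n}

/-- the topological (covering) dimension of Y, as lim_{ε→0} dim_ε Y -/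
noncomputable def topDim (Y : Set X) : ℕ∞ :=
  ⨆ (ε : ℝ) (_ : 0 < ε), dimEps Y ε

/-- dim Y > D, for an integer D ≥ -1 (nonempty sets have dimension ≥ 0 > -1) -/
def DimGT (Y : Set X) (D : ℤ) : Prop := D < 0 ∨ ((D.toNat : ℕ∞) < topDim Y)

/-- the n-th iterate (n ∈ ℤ) of a homeomorphism -/
def hiter (f : X ≃ₜ X) (n : ℤ) : X → X := ⇑(f.toEquiv ^ n)

/-- partially expansive with central dimension D and expansive constant ε -/
def PartiallyExpansive (f : X ≃ₜ X) (D : ℤ) (ε : ℝ) : Prop :=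
  ∀ C : Set X, IsCompact C → C.Nontrivial → DimGT C D →
    ∃ k : ℤ, ε ≤ Metric.diam (hiter f k '' C)

open Bornology

section Aux

variable {X : Type*} [MetricSpace X]

lemma chain_dim (C : Set X) (η : ℝ) (hη : 0 < η)
    (m : ℕ) (F : Fin m → Set X) (hF : ∀ i, IsCompact (F i))
    (hcov : C ⊆ ⋃ i, F i) (hdiam : ∀ i, Metric.diam (F i) ≤ η/3)
    (H3 : ∀ i j k : Fin m, i ≠ j → i ≠ k → j ≠ k →
      Disjoint (F i) (F j) ∨ Disjoint (F i) (F k) ∨ Disjoint (F j) (F k)) :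
    DimEpsLE C η 1 := by
  have hth : ∀ i j : Fin m, ∃ d : ℝ, 0 < d ∧
      (Disjoint (F i) (F j) → Disjoint (thickening d (F i)) (thickening d (F j))) := by
    intro i j
    by_cases h : Disjoint (F i) (F j)
    · obtain ⟨d, hd, hdd⟩ := h.exists_thickenings (hF i) (hF j).isClosed
      exact ⟨d, hd, fun _ => hdd⟩
    · exact ⟨1, one_pos, fun hc => absurd hc h⟩
  choose d hd hdd using hth
  set s : Finset ℝ :=
    insert (η/4) (Finset.image (fun p : Fin m × Fin m => d p.1 p.2) Finset.univ) with hs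
  have hsne : s.Nonempty := ⟨η/4, Finset.mem_insert_self _ _⟩
  set r : ℝ := s.min' hsne with hrdef
  have hr0 : 0 < r := by
    have hmem := s.min'_mem hsne
    rcases Finset.mem_insert.mp hmem with h | h
    · rw [hrdef, h]; linarith
    · obtain ⟨p, _, hp⟩ := Finset.mem_image.mp h
      rw [hrdef, ← hp]; exact hd p.1 p.2
  have hrη : r ≤ η/4 := Finset.min'_le _ _ (Finset.mem_insert_self _ _)
  have hrd : ∀ i j, r ≤ d i j := fun i j =>
    Finset.min'_le _ _ (Finset.mem_insert_of_mem
      (Finset.mem_image.mpr ⟨(i, j), Finset.mem_univ _, rfl⟩))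
  have hdisj : ∀ i j, Disjoint (F i) (F j) →
      Disjoint (thickening r (F i)) (thickening r (F j)) := by
    intro i j h
    exact Disjoint.mono (thickening_mono (hrd i j) _) (thickening_mono (hrd i j) _) (hdd i j h)
  refine ⟨Set.range (fun i => thickening r (F i)), ?_, ?_, ?_, ?_⟩
  · rintro A ⟨i, rfl⟩; exact isOpen_thickening
  · intro z hz
    obtain ⟨i, hzi⟩ := mem_iUnion.mp (hcov hz)
    exact ⟨thickening r (F i), ⟨i, rfl⟩, self_subset_thickening hr0 _ hzi⟩
  · rintro A ⟨i, rfl⟩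
    have hb : diam (thickening r (F i)) ≤ 5*η/6 := by
      apply diam_le_of_forall_dist_le (by linarith)
      intro a ha b hb
      obtain ⟨a', ha', haa⟩ := mem_thickening_iff.mp ha
      obtain ⟨b', hb', hbb⟩ := mem_thickening_iff.mp hb
      have h1 : dist a' b' ≤ diam (F i) := dist_le_diam_of_mem (hF i).isBounded ha' hb'
      have h2 := hdiam i
      calc dist a b ≤ dist a a' + dist a' b' + dist b' b := dist_triangle4 a a' b' b
        _ ≤ r + η/3 + r := by
            have h3 : dist b' b = dist b b' := dist_comm _ _
            linarith [haa.le, hbb.le]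
        _ ≤ 5*η/6 := by linarith
    linarith
  · intro 𝒱 h𝒱 hcard
    obtain ⟨A, B, E, hA, hB, hE, hAB, hAE, hBE⟩ := Finset.two_lt_card_iff.mp hcard
    obtain ⟨i, hi⟩ := h𝒱 hA
    obtain ⟨j, hj⟩ := h𝒱 hB
    obtain ⟨k, hk⟩ := h𝒱 hE
    have hij : i ≠ j := by rintro rfl; exact hAB (hi ▸ hj ▸ rfl)
    have hik : i ≠ k := by rintro rfl; exact hAE (hi ▸ hk ▸ rfl)
    have hjk : j ≠ k := by rintro rfl; exact hBE (hj ▸ hk ▸ rfl)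
    have key : ∀ P Q : Set X, P ∈ 𝒱 → Q ∈ 𝒱 → Disjoint P Q →
        ⋂₀ (𝒱 : Set (Set X)) = ∅ := by
      intro P Q hP hQ hPQ
      rw [Set.eq_empty_iff_forall_notMem]
      intro z hz
      exact (hPQ.ne_of_mem (hz P hP) (hz Q hQ)) rfl
    rcases H3 i j k hij hik hjk with h | h | h
    · exact key A B hA hB (hi ▸ hj ▸ hdisj i j h)
    · exact key A E hA hE (hi ▸ hk ▸ hdisj i k h)
    · exact key B E hB hE (hj ▸ hk ▸ hdisj j k h)

lemma exists_piece (A h s : ℝ) (hh : 0 < h) (N : ℕ) (hN : 0 < N)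
    (hs : s ∈ Icc A (A + N * h)) :
    ∃ i : Fin N, s ∈ Icc (A + i * h) (A + (i + 1) * h) := by
  obtain ⟨hs1, hs2⟩ := hs
  set k : ℤ := ⌊(s - A) / h⌋ with hk
  have hk0 : 0 ≤ k := Int.floor_nonneg.mpr (div_nonneg (by linarith) hh.le)
  have hkl : (k : ℝ) * h ≤ s - A := by
    rw [← le_div_iff₀ hh]; exact Int.floor_le _
  have hku : s - A < ((k : ℝ) + 1) * h := by
    rw [← div_lt_iff₀ hh]
    have := Int.lt_floor_add_one ((s - A) / h)
    exact_mod_cast this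
  have hcast : ((k.toNat : ℕ) : ℝ) = (k : ℝ) := by exact_mod_cast Int.toNat_of_nonneg hk0
  by_cases hc : k.toNat ≤ N - 1
  · refine ⟨⟨k.toNat, by omega⟩, ?_, ?_⟩ <;> simp only [Fin.val_mk] <;> rw [hcast] <;> linarith
  · refine ⟨⟨N - 1, by omega⟩, ?_, ?_⟩ <;> simp only [Fin.val_mk]
    · have h1 : ((N - 1 : ℕ) : ℝ) ≤ (k : ℝ) := by
        have h2 : ((N:ℤ) - 1) ≤ k := by omega
        calc ((N - 1 : ℕ) : ℝ) ≤ (N : ℝ) - 1 := by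
              rcases N with _ | n
              · omega
              · push_cast [Nat.succ_sub_one]; linarith
          _ ≤ (k : ℝ) := by exact_mod_cast (by exact_mod_cast h2 : ((N:ℤ) - 1 : ℤ) ≤ k)
      nlinarith
    · have h1 : ((N - 1 : ℕ) : ℝ) + 1 = (N : ℝ) := by
        rcases N with _ | n
        · omega
        · push_cast [Nat.succ_sub_one]; ring
      rw [h1]; linarith

lemma not_dimGT_one (C : Set X) (h : ∀ η : ℝ, 0 < η → DimEpsLE C η 1) : ¬ DimGT C 1 := by
  rintro (h1 | h1)
  · omega
  · have hle : topDim C ≤ ((1:ℕ) : ℕ∞) := by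
      refine iSup₂_le fun ε hε => ?_
      exact sInf_le ⟨1, rfl, h ε hε⟩
    rw [show ((1:ℤ).toNat : ℕ∞) = ((1:ℕ) : ℕ∞) from rfl] at h1
    exact absurd h1 (not_lt.mpr hle)

lemma dim_of_curve (C : Set X) (γ : ℝ → X) (hγ : Continuous γ) (A B : ℝ) (hAB : A < B)
    (hC : C ⊆ γ '' Icc A B)
    (Hsep : ∀ s t, s ∈ Icc A B → t ∈ Icc A B → γ s = γ t →
      s = t ∨ (s = A ∧ t = B) ∨ (s = B ∧ t = A)) :
    ∀ η : ℝ, 0 < η → DimEpsLE C η 1 := by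
  intro η hη
  have huc := (isCompact_Icc (a := A) (b := B)).uniformContinuousOn_of_continuous
    hγ.continuousOn
  rw [Metric.uniformContinuousOn_iff] at huc
  obtain ⟨θ, hθ, hθprop⟩ := huc (η/6) (by linarith)
  obtain ⟨M, hM⟩ := exists_nat_gt ((B - A)/θ)
  set N : ℕ := max 4 (M + 1) with hN
  have hN4 : 4 ≤ N := le_max_left _ _
  have hN0 : 0 < N := by omega
  have hNR : (0:ℝ) < N := by exact_mod_cast hN0
  have hNM : ((B - A)/θ) < N := by
    calc ((B - A)/θ) < M := hM
      _ ≤ N := by exact_mod_cast le_trans (Nat.le_succ M) (le_max_right _ _)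
  set h : ℝ := (B - A)/N with hh
  have hh0 : 0 < h := div_pos (by linarith) hNR
  have hhθ : h < θ := by
    rw [hh, div_lt_iff₀ hNR]
    calc B - A = ((B-A)/θ) * θ := by field_simp
      _ < N * θ := by exact mul_lt_mul_of_pos_right hNM hθ
      _ = θ * N := by ring
  have hB : B = A + N * h := by rw [hh]; field_simp; ring
  set F : Fin N → Set X := fun i => γ '' Icc (A + i*h) (A + (i+1)*h) with hF
  have hsub : ∀ i : Fin N, Icc (A + i*h) (A + (i+1)*h) ⊆ Icc A B := by
    intro i
    apply Icc_subset_Icc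
    · nlinarith [Nat.cast_nonneg (α := ℝ) i.1]
    · rw [hB]
      have : ((i:ℕ):ℝ) + 1 ≤ (N:ℝ) := by exact_mod_cast i.isLt
      nlinarith
  have hcomp : ∀ i, IsCompact (F i) := fun i => isCompact_Icc.image hγ
  have hcov : C ⊆ ⋃ i, F i := by
    intro y hy
    obtain ⟨s, hs, rfl⟩ := hC hy
    rw [hB] at hs
    obtain ⟨i, hi⟩ := exists_piece A h s hh0 N hN0 hs
    exact mem_iUnion.mpr ⟨i, mem_image_of_mem _ hi⟩
  have hdiam : ∀ i, Metric.diam (F i) ≤ η/3 := by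
    intro i
    apply diam_le_of_forall_dist_le (by linarith)
    rintro _ ⟨s, hs, rfl⟩ _ ⟨t, ht, rfl⟩
    have h1 : dist s t < θ := by
      rw [Real.dist_eq]
      obtain ⟨hs1, hs2⟩ := hs
      obtain ⟨ht1, ht2⟩ := ht
      rw [abs_lt]
      constructor <;> nlinarith
    have := hθprop s (hsub i hs) t (hsub i ht) h1
    linarith
  have key : ∀ a b : Fin N, (a:ℕ)+2 ≤ (b:ℕ) → ¬((a:ℕ) = 0 ∧ (b:ℕ)+1 = N) →
      Disjoint (F a) (F b) := by
    intro a b hab hnw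
    rw [Set.disjoint_iff_inter_eq_empty, Set.eq_empty_iff_forall_notMem]
    rintro z ⟨⟨s, hs, rfl⟩, ⟨t, ht, hts⟩⟩
    have habR : ((a:ℕ):ℝ) + 2 ≤ ((b:ℕ):ℝ) := by exact_mod_cast hab
    rcases Hsep t s (hsub b ht) (hsub a hs) hts with h1 | ⟨h1, h2⟩ | ⟨h1, h2⟩
    · obtain ⟨hs1, hs2⟩ := hs
      obtain ⟨ht1, ht2⟩ := ht
      rw [h1] at ht1
      nlinarith
    · obtain ⟨ht1, ht2⟩ := ht
      obtain ⟨hs1, hs2⟩ := hs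
      rw [h1] at ht1
      rw [h2, hB] at hs2
      have hb0 : ((b:ℕ):ℝ) ≤ 0 := by nlinarith
      have : (b:ℕ) = 0 := by exact_mod_cast le_antisymm (by exact_mod_cast hb0) (Nat.zero_le _)
      omega
    · obtain ⟨ht1, ht2⟩ := ht
      obtain ⟨hs1, hs2⟩ := hs
      rw [h2] at hs1
      rw [h1, hB] at ht2
      have ha0 : ((a:ℕ):ℝ) ≤ 0 := by nlinarith
      have ha0' : (a:ℕ) = 0 := by
        exact_mod_cast le_antisymm (by exact_mod_cast ha0) (Nat.zero_le _)
      have hbN : (N:ℝ) ≤ ((b:ℕ):ℝ) + 1 := by nlinarith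
      have hbN' : N ≤ (b:ℕ) + 1 := by exact_mod_cast hbN
      have := b.isLt
      exact hnw ⟨ha0', by omega⟩
  have keysymm : ∀ a b : Fin N, (a:ℕ)+2 ≤ (b:ℕ) → ¬((a:ℕ) = 0 ∧ (b:ℕ)+1 = N) →
      Disjoint (F b) (F a) := fun a b h1 h2 => (key a b h1 h2).symm
  apply chain_dim C η hη N F hcomp hcov hdiam
  intro i j k hij hik hjk
  have hij' : (i:ℕ) ≠ (j:ℕ) := fun hc => hij (Fin.ext hc)
  have hik' : (i:ℕ) ≠ (k:ℕ) := fun hc => hik (Fin.ext hc)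
  have hjk' : (j:ℕ) ≠ (k:ℕ) := fun hc => hjk (Fin.ext hc)
  have hiN := i.isLt
  have hjN := j.isLt
  have hkN := k.isLt
  have big :
      ((i:ℕ)+2 ≤ (j:ℕ) ∧ ¬((i:ℕ) = 0 ∧ (j:ℕ)+1 = N)) ∨
      ((j:ℕ)+2 ≤ (i:ℕ) ∧ ¬((j:ℕ) = 0 ∧ (i:ℕ)+1 = N)) ∨
      ((i:ℕ)+2 ≤ (k:ℕ) ∧ ¬((i:ℕ) = 0 ∧ (k:ℕ)+1 = N)) ∨
      ((k:ℕ)+2 ≤ (i:ℕ) ∧ ¬((k:ℕ) = 0 ∧ (i:ℕ)+1 = N)) ∨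
      ((j:ℕ)+2 ≤ (k:ℕ) ∧ ¬((j:ℕ) = 0 ∧ (k:ℕ)+1 = N)) ∨
      ((k:ℕ)+2 ≤ (j:ℕ) ∧ ¬((k:ℕ) = 0 ∧ (j:ℕ)+1 = N)) := by
    omega
  rcases big with ⟨h1, h2⟩ | ⟨h1, h2⟩ | ⟨h1, h2⟩ | ⟨h1, h2⟩ | ⟨h1, h2⟩ | ⟨h1, h2⟩
  · exact Or.inl (key i j h1 h2)
  · exact Or.inl (keysymm j i h1 h2)
  · exact Or.inr (Or.inl (key i k h1 h2))
  · exact Or.inr (Or.inl (keysymm k i h1 h2))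
  · exact Or.inr (Or.inr (key j k h1 h2))
  · exact Or.inr (Or.inr (keysymm k j h1 h2))

end Aux

/-- The time-T map of a kinematic expansive flow on a compact metric space is
partially expansive with central dimension D = 1: there is δ > 0 such that every
compact set of dimension > 1 has some iterate (image under φ at time kT) of
diameter ≥ δ. -/
theorem timeT_of_kinematic_expansive_partiallyExpansive {X : Type*} [MetricSpace X]
    [CompactSpace X] (φ : ℝ → X → X)
    (hcont : Continuous fun p : ℝ × X => φ p.1 p.2)
    (h0 : ∀ x, φ 0 x = x)
    (hadd : ∀ s t x, φ (s + t) x = φ s (φ t x))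
    (hkin : ∀ ε : ℝ, 0 < ε → ∃ δ : ℝ, 0 < δ ∧ ∀ x y : X,
      (∀ t : ℝ, dist (φ t x) (φ t y) < δ) → ∃ s : ℝ, |s| < ε ∧ y = φ s x)
    (T : ℝ) (hT : T ≠ 0) :
    ∃ δ : ℝ, 0 < δ ∧ ∀ C : Set X, IsCompact C → C.Nontrivial → DimGT C 1 →
      ∃ k : ℤ, δ ≤ Metric.diam (φ (k * T) '' C) := by
  obtain ⟨δ0, hδ0, hexp⟩ := hkin 1 one_pos
  have hK : IsCompact ((Icc (-|T|) |T|) ×ˢ (univ : Set X)) :=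
    isCompact_Icc.prod isCompact_univ
  have huc := hK.uniformContinuousOn_of_continuous hcont.continuousOn
  rw [Metric.uniformContinuousOn_iff] at huc
  obtain ⟨δ', hδ', hδ'prop⟩ := huc δ0 hδ0
  have hstep : ∀ (a b : X) (u : ℝ), u ∈ Icc (-|T|) |T| → dist a b < δ' →
      dist (φ u a) (φ u b) < δ0 := by
    intro a b u hu hab
    have h1 : ((u, a) : ℝ × X) ∈ (Icc (-|T|) |T|) ×ˢ (univ : Set X) := ⟨hu, trivial⟩
    have h2 : ((u, b) : ℝ × X) ∈ (Icc (-|T|) |T|) ×ˢ (univ : Set X) := ⟨hu, trivial⟩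
    have h3 : dist ((u, a) : ℝ × X) ((u, b) : ℝ × X) < δ' := by
      rw [Prod.dist_eq]
      simp only [dist_self]
      rw [max_eq_right dist_nonneg]
      exact hab
    exact hδ'prop _ h1 _ h2 h3
  refine ⟨δ', hδ', ?_⟩
  intro C hC hCnt hCdim
  by_contra hcon
  push_neg at hcon
  obtain ⟨x, hx, y0, hy0, hxy0⟩ := hCnt
  have hφk : ∀ k : ℤ, Continuous (φ ((k:ℝ) * T)) := fun k =>
    hcont.comp (continuous_const.prodMk continuous_id)
  have key : ∀ y ∈ C, ∃ s : ℝ, |s| < 1 ∧ y = φ s x := by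
    intro y hy
    apply hexp x y
    intro t
    set k : ℤ := round (t / T) with hk
    set u : ℝ := t - k * T with hu
    have hu1 : |u| ≤ |T| / 2 := by
      have h1 : |t / T - k| ≤ 1/2 := abs_sub_round (t / T)
      have h2 : u = T * (t / T - k) := by rw [hu]; field_simp
      rw [h2, abs_mul]
      have := abs_nonneg T
      nlinarith
    have hu2 : u ∈ Icc (-|T|) |T| := by
      rw [mem_Icc]
      have h4 := abs_nonneg T
      cases' abs_le.mp hu1 with hl hr
      constructor <;> linarith
    have hd : dist (φ ((k:ℝ) * T) x) (φ ((k:ℝ) * T) y) < δ' := by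
      have hb : Bornology.IsBounded (φ ((k:ℝ) * T) '' C) := (hC.image (hφk k)).isBounded
      calc dist (φ ((k:ℝ) * T) x) (φ ((k:ℝ) * T) y)
          ≤ diam (φ ((k:ℝ) * T) '' C) :=
            dist_le_diam_of_mem hb (mem_image_of_mem _ hx) (mem_image_of_mem _ hy)
        _ < δ' := hcon k
    have ht : t = u + (k:ℝ) * T := by rw [hu]; ring
    rw [ht, hadd, hadd]
    exact hstep _ _ u hu2 hd
  -- C lies on a short orbit segment of x ; study the period group of x
  have hγcont : Continuous (fun s : ℝ => φ s x) :=
    hcont.comp (continuous_id.prodMk continuous_const)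
  set γ : ℝ → X := fun s => φ s x with hγdef
  set G : AddSubgroup ℝ :=
    { carrier := {t : ℝ | φ t x = x}
      zero_mem' := h0 x
      add_mem' := by
        intro a b ha hb
        simp only [Set.mem_setOf_eq] at ha hb ⊢
        rw [hadd, hb, ha]
      neg_mem' := by
        intro a ha
        simp only [Set.mem_setOf_eq] at ha ⊢
        have h1 : φ (-a + a) x = φ (-a) (φ a x) := hadd _ _ _
        rw [ha, neg_add_cancel, h0] at h1
        exact h1.symm } with hGdef
  have hGmem : ∀ t : ℝ, t ∈ G ↔ φ t x = x := fun t => Iff.rfl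
  have hdiff : ∀ s t : ℝ, γ s = γ t → t - s ∈ G := by
    intro s t hst
    rw [hGmem]
    have h1 : φ (-s + t) x = φ (-s) (φ t x) := hadd _ _ _
    have h2 : φ (-s + s) x = φ (-s) (φ s x) := hadd _ _ _
    rw [neg_add_cancel, h0] at h2
    have hst' : φ s x = φ t x := hst
    rw [← hst'] at h1
    rw [show t - s = -s + t by ring]
    exact h1.trans h2.symm
  have hshift : ∀ (u g : ℝ), g ∈ G → γ (u + g) = γ u := by
    intro u g hg
    show φ (u + g) x = φ u x
    rw [hadd, (hGmem g).mp hg]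
  rcases G.dense_or_cyclic with hdense | ⟨a0, ha0⟩
  · -- dense period group : x is a fixed point, contradicting nontriviality
    have hclosed : IsClosed (G : Set ℝ) := by
      have heq : (G : Set ℝ) = γ ⁻¹' {x} := by
        ext t
        simp only [SetLike.mem_coe, hGmem, mem_preimage, mem_singleton_iff]
        exact Iff.rfl
      rw [heq]
      exact IsClosed.preimage hγcont isClosed_singleton
    have huniv : (G : Set ℝ) = Set.univ := by
      rw [← hclosed.closure_eq]; exact hdense.closure_eq
    obtain ⟨s0, _, hs0⟩ := key y0 hy0
    have hs0G : s0 ∈ (G : Set ℝ) := huniv ▸ mem_univ s0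
    have hfix : φ s0 x = x := (hGmem s0).mp hs0G
    exact hxy0 ((hs0.trans hfix).symm)
  · have ha0G : a0 ∈ G := by rw [ha0]; exact AddSubgroup.subset_closure (Set.mem_singleton a0)
    have hmemn : ∀ t : ℝ, t ∈ G → ∃ n : ℤ, (n:ℝ) * a0 = t := by
      intro t ht
      rw [ha0] at ht
      obtain ⟨n, hn⟩ := AddSubgroup.mem_closure_singleton.mp ht
      exact ⟨n, by rw [← hn]; simp [zsmul_eq_mul]⟩
    have hnG : ∀ n : ℤ, ((n:ℝ) * a0) ∈ G := by
      intro n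
      have h1 := AddSubgroup.zsmul_mem G ha0G n
      simpa [zsmul_eq_mul] using h1
    by_cases ha00 : a0 = 0
    · -- trivial period group : the orbit map is injective
      have hinj : ∀ s t : ℝ, γ s = γ t → s = t := by
        intro s t hst
        obtain ⟨n, hn⟩ := hmemn _ (hdiff s t hst)
        rw [ha00, mul_zero] at hn
        linarith [hn]
      have hCsub : C ⊆ γ '' Icc (-1:ℝ) 1 := by
        intro y hy
        obtain ⟨s, hs1, hs2⟩ := key y hy
        cases' abs_lt.mp hs1 with hl hr
        exact ⟨s, ⟨by linarith, by linarith⟩, hs2.symm⟩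
      exact (not_dimGT_one C (dim_of_curve C γ hγcont (-1) 1 (by norm_num) hCsub
        (fun s t _ _ hst => Or.inl (hinj s t hst)))) hCdim
    · -- x is periodic with minimal period p = |a0|
      set p : ℝ := |a0| with hpdef
      have hp : 0 < p := abs_pos.mpr ha00
      have hmpG : ∀ m : ℤ, ((m:ℝ) * p) ∈ G := by
        intro m
        rcases abs_choice a0 with hcase | hcase
        · rw [hpdef, hcase]; exact hnG m
        · have h2 : (m:ℝ) * p = ((-m : ℤ):ℝ) * a0 := by rw [hpdef, hcase]; push_cast; ring
          rw [h2]; exact hnG (-m)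
      have hCsub : C ⊆ γ '' Icc 0 p := by
        intro y hy
        obtain ⟨s, _, hs2⟩ := key y hy
        set q : ℝ := s - p * ⌊s / p⌋ with hq
        have hfr : q = p * Int.fract (s / p) := by
          rw [hq, Int.fract]
          field_simp
        have hq0 : 0 ≤ q := by rw [hfr]; exact mul_nonneg hp.le (Int.fract_nonneg _)
        have hq1 : q ≤ p := by
          rw [hfr]
          nlinarith [Int.fract_lt_one (s / p), Int.fract_nonneg (s / p)]
        have hgam : γ s = γ q := by
          calc γ s = γ (q + (⌊s / p⌋ : ℝ) * p) := congrArg γ (by rw [hq]; ring)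
            _ = γ q := hshift q _ (hmpG ⌊s / p⌋)
        exact ⟨q, ⟨hq0, hq1⟩, by rw [← hgam]; exact hs2.symm⟩
      have Hsep : ∀ s t, s ∈ Icc 0 p → t ∈ Icc 0 p → γ s = γ t →
          s = t ∨ (s = 0 ∧ t = p) ∨ (s = p ∧ t = 0) := by
        intro s t hs ht hst
        obtain ⟨hsl, hsu⟩ := hs
        obtain ⟨htl, htu⟩ := ht
        obtain ⟨n, hn⟩ := hmemn _ (hdiff s t hst)
        rcases eq_or_ne n 0 with rfl | hn0
        · left
          simp only [Int.cast_zero, zero_mul] at hn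
          linarith [hn]
        · have h1 : (1:ℝ) ≤ |(n:ℝ)| := by exact_mod_cast Int.one_le_abs hn0
          have h2 : |t - s| = |(n:ℝ)| * p := by rw [← hn, abs_mul]
          have h3 : |t - s| ≤ p := by rw [abs_le]; constructor <;> linarith
          have h4 : p ≤ |t - s| := by
            calc p = 1 * p := (one_mul p).symm
              _ ≤ |(n:ℝ)| * p := mul_le_mul_of_nonneg_right h1 hp.le
              _ = |t - s| := h2.symm
          have h5 : |t - s| = p := le_antisymm h3 h4
          rcases abs_eq hp.le |>.mp h5 with h6 | h6
          · right; left
            constructor <;> linarith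
          · right; right
            constructor <;> linarith
      exact (not_dimGT_one C (dim_of_curve C γ hγcont 0 p hp hCsub Hsep)) hCdim
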